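/- arXiv:1605.01118 — 2 statements merged into one kernel-verified Lean document; each statement's English description precedes it below -/
import Mathlib

section
/- Let A be an n×n real symmetric matrix with all diagonal entries nonzero, let G = G(A) be its sparsity graph, let T_1,…,T_s be symmetric sets of pairs of distinct indices, let H = 𝒫(G), and assume that for every i no pair of T_i is an edge of H. Fix a vertex v and let H_v be the subgraph of H induced on the closed neighborhood N[v,H], with the thresholding sets T_i restricted to pairs contained in N[v,H]. Then a vertex w ≠ v is adjacent to v in 𝒫(G) if and only if w ∈ N[v,H] and the copies of v and w are adjacent in 𝒫(H_v); that is, N(v,𝒫(G)) = N(v,𝒫(H_v)). -/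
attribute [local instance] Classical.propDecidable

variable {V : Type*}

/-- The sparsity graph of a matrix: distinct `i, j` are adjacent iff the entry is nonzero. -/
def sparsityGraph (A : Matrix V V ℝ) : SimpleGraph V :=
  SimpleGraph.fromRel (fun i j => A i j ≠ 0)

/-- The square of a graph, where every vertex implicitly carries a loop. -/
def sqGraph (G : SimpleGraph V) : SimpleGraph V where
  Adj v w := v ≠ w ∧ ∃ u, (u = v ∨ G.Adj u v) ∧ (u = w ∨ G.Adj u w)
  symm := ⟨fun v w ⟨hne, u, h1, h2⟩ => ⟨hne.symm, u, h2, h1⟩⟩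
  loopless := ⟨fun v h => h.1 rfl⟩

/-- Deleting the edges given by a (symmetric) set of pairs from a graph. -/
def delT (G : SimpleGraph V) (T : Set (V × V)) : SimpleGraph V where
  Adj v w := G.Adj v w ∧ (v, w) ∉ T ∧ (w, v) ∉ T
  symm := ⟨fun v w ⟨h, h1, h2⟩ => ⟨h.symm, h2, h1⟩⟩
  loopless := ⟨fun v h => G.loopless.irrefl v h.1⟩

/-- The worst-case structure operator `𝒫(G) = sq (del_{T₁} (sq (del_{T₂} (… sq (del_{T_s} G)))))`,
applying `T_s` first. -/
def PGraph : List (Set (V × V)) → SimpleGraph V → SimpleGraph V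
  | [], G => G
  | T :: rest, G => sqGraph (delT (PGraph rest G) T)

/-- Thresholding operation on matrices: entries at positions in `T` are replaced by `0`. -/
noncomputable def threshMat (T : Set (V × V)) (X : Matrix V V ℝ) : Matrix V V ℝ :=
  fun i j => if (i, j) ∈ T then 0 else X i j

/-- The quadratic matrix polynomial `a·X² + b·X + c·I`. -/
noncomputable def quadPoly [Fintype V] [DecidableEq V] (a b c : ℝ) (X : Matrix V V ℝ) :
    Matrix V V ℝ :=
  a • (X * X) + b • X + c • (1 : Matrix V V ℝ)

/-- The thresholded matrix polynomial `P(A) = P₁(T₁(⋯ P_s(T_s(A)) ⋯))`, where each step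
is given by coefficients `(a, b, c)` and a thresholding set `T`; `T_s` is applied first. -/
noncomputable def PMat [Fintype V] [DecidableEq V] :
    List (ℝ × ℝ × ℝ × Set (V × V)) → Matrix V V ℝ → Matrix V V ℝ
  | [], A => A
  | (a, b, c, T) :: rest, A => quadPoly a b c (threshMat T (PMat rest A))

/-- The closed neighborhood `N[v,H]` of a vertex. -/
def closedNbhd (H : SimpleGraph V) (v : V) : Set V := {w | w = v ∨ H.Adj v w}

/-- The closed neighborhood `N[S,H]` of a set of vertices. -/
def closedNbhdSet (H : SimpleGraph V) (S : Set V) : Set V := ⋃ v ∈ S, closedNbhd H v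

/-- Restriction of a set of pairs of vertices to those pairs contained in `S`. -/
def restrictPairs (T : Set (V × V)) (S : Set V) : Set (↥S × ↥S) :=
  {p | ((p.1 : V), (p.2 : V)) ∈ T}

/-- The principal submatrix of `A` on the index set `S`. -/
def submatrixOn (A : Matrix V V ℝ) (S : Set V) : Matrix ↥S ↥S ℝ :=
  fun i j => A (i : V) (j : V)

/-- A symmetric set of pairs of distinct vertices. -/
def SymmPairs (T : Set (V × V)) : Prop :=
  (∀ p ∈ T, p.1 ≠ p.2) ∧ ∀ p ∈ T, (p.2, p.1) ∈ T


lemma le_PGraph {V : Type*} (G₀ : SimpleGraph V) :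
    ∀ (Ts : List (Set (V × V))) (K : SimpleGraph V),
    G₀ ≤ K → (∀ T ∈ Ts, ∀ p ∈ T, ¬ G₀.Adj p.1 p.2) → G₀ ≤ PGraph Ts K
  | [], K, h, _ => h
  | T :: rest, K, h, hT => by
      intro a b hab
      have h1 : G₀ ≤ PGraph rest K :=
        le_PGraph G₀ rest K h (fun T' hT' => hT T' (List.mem_cons_of_mem _ hT'))
      exact ⟨hab.ne, a, Or.inl rfl, Or.inr
        ⟨h1 hab, fun hc => hT T List.mem_cons_self _ hc hab,
         fun hc => hT T List.mem_cons_self _ hc hab.symm⟩⟩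

/-- a vertex `w ≠ v` is adjacent to `v` in `𝒫(G)` iff `w ∈ N[v,H]` and the
copies of `v` and `w` are adjacent in `𝒫(H_v)`, where `H_v` is induced on `N[v,H]`. -/
theorem stmt1 {n : ℕ} (A : Matrix (Fin n) (Fin n) ℝ) (hA : A.IsSymm)
    (hdiag : ∀ i, A i i ≠ 0)
    (Ts : List (Set (Fin n × Fin n)))
    (hsym : ∀ T ∈ Ts, SymmPairs T)
    (H : SimpleGraph (Fin n))
    (hH : H = PGraph Ts (sparsityGraph A))
    (hTH : ∀ T ∈ Ts, ∀ p ∈ T, ¬ H.Adj p.1 p.2)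
    (v : Fin n) :
    ∀ w : Fin n, w ≠ v →
      ((PGraph Ts (sparsityGraph A)).Adj v w ↔
        ∃ (hv : v ∈ closedNbhd H v) (hw : w ∈ closedNbhd H v),
          (PGraph (Ts.map fun T => restrictPairs T (closedNbhd H v))
            (SimpleGraph.induce (closedNbhd H v) H)).Adj ⟨v, hv⟩ ⟨w, hw⟩) := by
  intro w hwv
  constructor
  · intro hAdj
    rw [← hH] at hAdj
    refine ⟨Or.inl rfl, Or.inr hAdj, ?_⟩
    set S := closedNbhd H v
    have key := le_PGraph (SimpleGraph.induce S H)
      (Ts.map fun T => restrictPairs T S) (SimpleGraph.induce S H) le_rfl ?_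
    · exact key hAdj
    · intro T' hT' p hp habs
      rcases List.mem_map.mp hT' with ⟨T, hTmem, rfl⟩
      exact hTH T hTmem _ hp habs
  · rintro ⟨hv, hw, -⟩
    rw [← hH]
    rcases hw with h | h
    · exact absurd h hwv
    · exact h
end

section
/- Let A be an n×n real symmetric matrix, let T_1,…,T_s be symmetric sets of pairs of distinct indices, and let P be the associated thresholded matrix polynomial with arbitrary real coefficients a_i, b_i, c_i. Then the sparsity graph of P(A) is a subgraph of 𝒫(G(A)): for all distinct v, w, if P(A) v w ≠ 0 then v and w are adjacent in 𝒫(G(A)). -/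
attribute [local instance] Classical.propDecidable

variable {V : Type*}

lemma thresh_ne {n : ℕ} (T : Set (Fin n × Fin n)) (X : Matrix (Fin n) (Fin n) ℝ)
    {i j : Fin n} (h : threshMat T X i j ≠ 0) : (i, j) ∉ T ∧ X i j ≠ 0 := by
  unfold threshMat at h
  by_cases hm : (i, j) ∈ T
  · simp [hm] at h
  · simpa [hm] using h

lemma step_lemma {n : ℕ} (X : Matrix (Fin n) (Fin n) ℝ) (H : SimpleGraph (Fin n))
    (hX : ∀ v w : Fin n, v ≠ w → X v w ≠ 0 → H.Adj v w)
    (T : Set (Fin n × Fin n)) (hT : SymmPairs T) (a b c : ℝ) :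
    ∀ v w : Fin n, v ≠ w → quadPoly a b c (threshMat T X) v w ≠ 0 →
      (sqGraph (delT H T)).Adj v w := by
  intro v w hvw h
  set Y := threshMat T X with hY
  have hnotT : ∀ i j : Fin n, (i, j) ∉ T → (j, i) ∉ T := by
    intro i j hij hji
    exact hij (hT.2 _ hji)
  -- key: Y i j ≠ 0 → delT H T adj (for i ≠ j)
  have key : ∀ i j : Fin n, i ≠ j → Y i j ≠ 0 → (delT H T).Adj i j := by
    intro i j hij hne
    obtain ⟨hmem, hx⟩ := thresh_ne T X hne
    exact ⟨hX i j hij hx, hmem, hnotT i j hmem⟩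
  refine ⟨hvw, ?_⟩
  have hq : a * ((Y * Y) v w) + b * Y v w + c * ((1 : Matrix (Fin n) (Fin n) ℝ) v w) ≠ 0 := by
    simpa [quadPoly, Matrix.add_apply, Matrix.smul_apply, smul_eq_mul] using h
  rw [Matrix.one_apply_ne hvw, mul_zero, add_zero] at hq
  by_cases hvw0 : Y v w ≠ 0
  · exact ⟨v, Or.inl rfl, Or.inr (key v w hvw hvw0)⟩
  · push_neg at hvw0
    rw [hvw0, mul_zero, add_zero] at hq
    have hsum : (Y * Y) v w ≠ 0 := by
      intro h0; rw [h0, mul_zero] at hq; exact hq rfl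
    rw [Matrix.mul_apply] at hsum
    obtain ⟨u, -, hu⟩ := Finset.exists_ne_zero_of_sum_ne_zero hsum
    have h1 : Y v u ≠ 0 := fun h0 => hu (by rw [h0, zero_mul])
    have h2 : Y u w ≠ 0 := fun h0 => hu (by rw [h0, mul_zero])
    have huv : u ≠ v := by rintro rfl; exact h2 hvw0
    have huw : u ≠ w := by rintro rfl; exact h1 hvw0
    exact ⟨u, Or.inr ((key v u huv.symm h1).symm), Or.inr (key u w huw h2)⟩

/-- the sparsity graph of `P(A)` is a subgraph of `𝒫(G(A))`. -/
theorem stmt7 {n : ℕ} (A : Matrix (Fin n) (Fin n) ℝ) (hA : A.IsSymm)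
    (steps : List (ℝ × ℝ × ℝ × Set (Fin n × Fin n)))
    (hsym : ∀ x ∈ steps, SymmPairs x.2.2.2) :
    ∀ v w : Fin n, v ≠ w → PMat steps A v w ≠ 0 →
      (PGraph (steps.map fun x => x.2.2.2) (sparsityGraph A)).Adj v w := by
  induction steps with
  | nil =>
    intro v w hvw h
    exact ⟨hvw, Or.inl h⟩
  | cons x rest ih =>
    obtain ⟨a, b, c, T⟩ := x
    intro v w hvw h
    exact step_lemma (PMat rest A) _
      (ih (fun y hy => hsym y (List.mem_cons_of_mem _ hy)))
      T (hsym _ List.mem_cons_self) a b c v w hvw h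
end
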